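/- For every d ≥ 1 and every d-regular graph E, the graph G_E of the construction is not Hamiltonian. -/

import Mathlib

open SimpleGraph

variable {V : Type*}

/-- The closed neighbourhood `N_G(S) = S ∪ {v : v adjacent to some w ∈ S}`. -/
def closedNbhd (G : SimpleGraph V) (S : Set V) : Set V :=
  S ∪ {v | ∃ w ∈ S, G.Adj v w}

/-- `G` has maximum degree at most `d`. -/
def MaxDegLE (G : SimpleGraph V) (d : ℕ) : Prop :=
  ∀ v, (G.neighborSet v).ncard ≤ d

/-- `G` is `ε`-far from being Hamiltonian (w.r.t. the degree bound `d`):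
modifying at most `ε·d·|V|` edges cannot make `G` Hamiltonian. -/
def FarFromHamiltonian [Fintype V] [DecidableEq V] (G : SimpleGraph V) (d : ℕ) (ε : ℝ) : Prop :=
  ∀ F : Finset (Sym2 V), (∀ e ∈ F, ¬ e.IsDiag) →
    (F.card : ℝ) ≤ ε * d * (Fintype.card V) →
    ¬ (SimpleGraph.fromEdgeSet (symmDiff G.edgeSet (↑F : Set (Sym2 V)))).IsHamiltonian

/-- `G` is `δ`-locally Hamiltonian on the class `C`: for every `S` with `|S| ≤ δ·|V|`
there is a Hamiltonian `H ∈ C` (on the same vertex set, hence of the same order),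
a set `T`, and an isomorphism `G[N_G(S)] ≅ H[N_H(T)]` mapping `S` onto `T`. -/
def LocallyHamiltonian [Fintype V] [DecidableEq V] (C : SimpleGraph V → Prop) (δ : ℝ)
    (G : SimpleGraph V) : Prop :=
  ∀ S : Set V, (S.ncard : ℝ) ≤ δ * (Fintype.card V) →
    ∃ H : SimpleGraph V, C H ∧ H.IsHamiltonian ∧ ∃ T : Set V,
      ∃ φ : (SimpleGraph.induce (closedNbhd G S) G) ≃g (SimpleGraph.induce (closedNbhd H T) H),
        ∀ x : closedNbhd G S, (x : V) ∈ S ↔ ((φ x : V) ∈ T)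

/-- `S` witnesses non-Hamiltonicity of `G` among graphs of maximum degree at most `d`:
no Hamiltonian graph `H` of the same order with degree bound `d` admits a set `T` and an
isomorphism `G[N_G(S)] ≅ H[N_H(T)]` mapping `S` onto `T`. -/
def WitnessesNonHamiltonicity [Fintype V] [DecidableEq V] (G : SimpleGraph V) (d : ℕ)
    (S : Set V) : Prop :=
  ∀ H : SimpleGraph V, H.IsHamiltonian → MaxDegLE H d → ∀ T : Set V,
    ¬ ∃ φ : (SimpleGraph.induce (closedNbhd G S) G) ≃g (SimpleGraph.induce (closedNbhd H T) H),
        ∀ x : closedNbhd G S, (x : V) ∈ S ↔ ((φ x : V) ∈ T)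

/-- `E` is `d`-regular. -/
def IsRegularDeg (E : SimpleGraph V) (d : ℕ) : Prop :=
  ∀ v, (E.neighborSet v).ncard = d

/-- The arcs of the directed graph `→E` obtained by replacing each edge by two arcs. -/
abbrev Arc (E : SimpleGraph V) : Type _ := {p : V × V // E.Adj p.1 p.2}

instance arcDecPred [Fintype V] (E : SimpleGraph V) [DecidableRel E.Adj] :
    DecidablePred (fun p : V × V => E.Adj p.1 p.2) := fun p => ‹DecidableRel E.Adj› p.1 p.2

/-- The vertex set of `G_E`: 31 `a`-vertices per arc and 6 `b`-vertices per vertex. -/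
abbrev GEVert (E : SimpleGraph V) : Type _ := (Arc E × Fin 31) ⊕ (V × Fin 6)

/-- For `1 ≤ j ≤ 31`, the vertex `a_j^e` of `G_E`. -/
def aV {E : SimpleGraph V} (e : Arc E) (j : ℕ) : GEVert E :=
  Sum.inl (e, ⟨(j - 1) % 31, by omega⟩)

/-- For `1 ≤ k ≤ 6`, the vertex `b_k^v` of `G_E`. -/
def bV (E : SimpleGraph V) (v : V) (k : ℕ) : GEVert E :=
  Sum.inr (v, ⟨(k - 1) % 6, by omega⟩)

/-- Adjacency (with 1-based indices) inside the gadget `P(v_1,…,v_31)` (unsymmetrised):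
`{v_i, v_{i+1}}` for `1 ≤ i ≤ 30`, `{v_j, v_{j+3}}` for `j ∈ {2,27}`, and
`{v_k, v_{k+5}}` for `k ∈ {6,12,15,21}`. -/
def gadgetRel (i j : ℕ) : Prop :=
  (1 ≤ i ∧ i ≤ 30 ∧ j = i + 1) ∨
  ((i = 2 ∧ j = 5) ∨ (i = 27 ∧ j = 30) ∨ (i = 6 ∧ j = 11) ∨ (i = 12 ∧ j = 17) ∨
    (i = 15 ∧ j = 20) ∨ (i = 21 ∧ j = 26))

/-- The generating relation for the edges of `G_E`: the gadget edges, the cyclic edges given by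
the linear order `f` on arcs, and the link edges (a link from the gadget of an arc `e = (u,v)`
to the gadget of an arc `e' = (v,w)` via `b_1^v,…,b_6^v`). -/
def GERel [Fintype V] (E : SimpleGraph V) [DecidableRel E.Adj]
    (f : Arc E ≃ Fin (Fintype.card (Arc E))) (x y : GEVert E) : Prop :=
  (∃ (e : Arc E) (i j : ℕ), gadgetRel i j ∧ x = aV e i ∧ y = aV e j) ∨
  (∃ e e' : Arc E, (f e').val = ((f e).val + 1) % (Fintype.card (Arc E)) ∧
      x = aV e 31 ∧ y = aV e' 1) ∨
  (∃ e e' : Arc E, e.1.2 = e'.1.1 ∧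
    ((x = aV e 23 ∧ y = aV e' 3) ∨ (x = aV e 18 ∧ y = aV e' 8) ∨
     (x = aV e 29 ∧ y = aV e' 9) ∨ (x = aV e 24 ∧ y = aV e' 14) ∨
     (x = aV e' 5 ∧ y = bV E e.1.2 1) ∨ (x = bV E e.1.2 1 ∧ y = bV E e.1.2 2) ∨
     (x = bV E e.1.2 2 ∧ y = bV E e.1.2 3) ∨ (x = bV E e.1.2 3 ∧ y = aV e 23) ∨
     (x = aV e 24 ∧ y = bV E e.1.2 4) ∨ (x = bV E e.1.2 4 ∧ y = bV E e.1.2 5) ∨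
     (x = bV E e.1.2 5 ∧ y = bV E e.1.2 6) ∨ (x = bV E e.1.2 6 ∧ y = aV e' 12)))

/-- The graph `G_E` of the construction. -/
def GE [Fintype V] (E : SimpleGraph V) [DecidableRel E.Adj]
    (f : Arc E ≃ Fin (Fintype.card (Arc E))) : SimpleGraph (GEVert E) :=
  SimpleGraph.fromRel (GERel E f)

/-- The list `L` of vertices is a subpath of the closed walk `C`, i.e. it appears (forwards or
reversed) as a sequence of consecutive vertices of `C` (cyclically). -/
def IsSubpath {W : Type*} (G : SimpleGraph W) {x : W} (C : G.Walk x x) (L : List W) : Prop :=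
  (∃ i : ℕ, ∀ (j : ℕ) (h : j < L.length), L.get ⟨j, h⟩ = C.getVert ((i + j) % C.length)) ∨
  (∃ i : ℕ, ∀ (j : ℕ) (h : j < L.reverse.length),
      L.reverse.get ⟨j, h⟩ = C.getVert ((i + j) % C.length))

/-- The expansion ratio of `E` is at least `1`: every nonempty `S` with `|S| ≤ |V|/2` has at
least `|S|` boundary edges. -/
def ExpansionGeOne [Fintype V] (E : SimpleGraph V) : Prop :=
  ∀ S : Set V, S.Nonempty → 2 * S.ncard ≤ Fintype.card V →
    S.ncard ≤ {p : Sym2 V | p ∈ E.edgeSet ∧ ∃ x ∈ S, ∃ y, y ∉ S ∧ p = s(x, y)}.ncard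


set_option linter.unusedSectionVars false
namespace NHaux

variable {W : Type*} [DecidableEq W] {G : SimpleGraph W}

lemma endUnique {a b : W} (w : G.Walk a b) (hw : w.IsPath) : ∀ y z : W,
    s(b, y) ∈ w.edges → s(b, z) ∈ w.edges → y = z := by
  induction w with
  | nil => intro y z hy _; simp at hy
  | @cons a c b hadj w ih =>
    intro y z hy hz
    rw [Walk.cons_isPath_iff] at hw
    have hab : a ≠ b := fun hab => hw.2 (hab ▸ w.end_mem_support)
    have head : ∀ u : W, s(b, u) = s(a, c) → u = a ∧ b = c := by
      intro u hu
      rw [Sym2.eq_iff] at hu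
      rcases hu with ⟨hba, huc⟩ | ⟨hbc, hua⟩
      · exact absurd hba.symm hab
      · exact ⟨hua, hbc⟩
    simp only [Walk.edges_cons, List.mem_cons] at hy hz
    rcases hy with hy | hy <;> rcases hz with hz | hz
    · rw [(head _ hy).1, (head _ hz).1]
    · obtain ⟨-, hbc⟩ := head _ hy
      subst hbc
      rw [Walk.isPath_iff_eq_nil.mp hw.1] at hz
      simp at hz
    · obtain ⟨-, hbc⟩ := head _ hz
      subst hbc
      rw [Walk.isPath_iff_eq_nil.mp hw.1] at hy
      simp at hy
    · exact ih hw.1 y z hy hz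

lemma cycle_atMostTwo {x : W} {q : G.Walk x x} (hq : q.IsCycle) {y₁ y₂ y₃ : W}
    (h12 : y₁ ≠ y₂) (h13 : y₁ ≠ y₃) (h23 : y₂ ≠ y₃)
    (h1 : s(x, y₁) ∈ q.edges) (h2 : s(x, y₂) ∈ q.edges) (h3 : s(x, y₃) ∈ q.edges) : False := by
  cases q with
  | nil => exact Walk.IsCycle.not_of_nil hq
  | @cons _ c _ hadj w =>
    rw [Walk.cons_isCycle_iff] at hq
    have cl : ∀ y : W, s(x, y) ∈ (Walk.cons hadj w).edges → y = c ∨ s(x, y) ∈ w.edges := by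
      intro y hy
      simp only [Walk.edges_cons, List.mem_cons] at hy
      rcases hy with hy | hy
      · rw [Sym2.eq_iff] at hy
        rcases hy with ⟨-, rfl⟩ | ⟨rfl, rfl⟩
        · exact Or.inl rfl
        · exact absurd rfl hadj.ne
      · exact Or.inr hy
    rcases cl y₁ h1 with c1 | c1 <;> rcases cl y₂ h2 with c2 | c2 <;>
      rcases cl y₃ h3 with c3 | c3
    · exact h12 (c1.trans c2.symm)
    · exact h12 (c1.trans c2.symm)
    · exact h13 (c1.trans c3.symm)
    · exact h23 (endUnique w hq.1 _ _ c2 c3)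
    · exact h23 (c2.trans c3.symm)
    · exact h13 (endUnique w hq.1 _ _ c1 c3)
    · exact h12 (endUnique w hq.1 _ _ c1 c2)
    · exact h12 (endUnique w hq.1 _ _ c1 c2)

lemma cycle_twoNbrs {x : W} {q : G.Walk x x} (hq : q.IsCycle) :
    ∃ y z : W, y ≠ z ∧ s(x, y) ∈ q.edges ∧ s(x, z) ∈ q.edges := by
  cases q with
  | nil => exact absurd rfl hq.ne_nil
  | @cons _ c _ hadj w =>
    rw [Walk.cons_isCycle_iff] at hq
    obtain ⟨d, hxd, w', hw'⟩ := Walk.exists_eq_cons_of_ne hadj.ne w.reverse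
    have hd : s(x, d) ∈ w.edges := by
      have : s(x, d) ∈ w.reverse.edges := by rw [hw']; simp
      rwa [Walk.edges_reverse, List.mem_reverse] at this
    refine ⟨c, d, ?_, by simp, by simp [hd]⟩
    rintro rfl
    exact hq.2 hd

lemma mem_tail_support_of_closed {r : W} {p : G.Walk r r} (hnil : ¬ p.Nil) {z : W}
    (hz : z ∈ p.support) : z ∈ p.support.tail := by
  cases p with
  | nil => simp at hnil
  | cons hadj w =>
    simp only [Walk.support_cons, List.mem_cons, List.tail_cons] at hz ⊢
    rcases hz with rfl | hz
    · exact w.end_mem_support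
    · exact hz

lemma walk_support_closed {r : W} {p0 : G.Walk r r} (S : Set W)
    (hS : ∀ x ∈ S, ∀ y, s(x, y) ∈ p0.edges → y ∈ S) :
    ∀ {a b : W} (w : G.Walk a b), (∀ e ∈ w.edges, e ∈ p0.edges) → a ∈ S →
      ∀ u ∈ w.support, u ∈ S := by
  intro a b w
  induction w with
  | nil =>
    intro _ ha u hu
    simp only [Walk.support_nil, List.mem_singleton] at hu
    exact hu ▸ ha
  | @cons a c b hadj w ih =>
    intro hsub ha u hu
    have hc : c ∈ S := hS _ ha _ (hsub _ (by simp))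
    simp only [Walk.support_cons, List.mem_cons] at hu
    rcases hu with rfl | hu
    · exact ha
    · exact ih (fun e he => hsub e (by simp [he])) hc u hu

section Ham
variable {r : W} {p : G.Walk r r} (hp : p.IsHamiltonianCycle)
include hp

lemma ham_atMostTwo (x : W) {y₁ y₂ y₃ : W}
    (h12 : y₁ ≠ y₂) (h13 : y₁ ≠ y₃) (h23 : y₂ ≠ y₃)
    (h1 : s(x, y₁) ∈ p.edges) (h2 : s(x, y₂) ∈ p.edges) (h3 : s(x, y₃) ∈ p.edges) : False := by
  have hx : x ∈ p.support := hp.mem_support x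
  have hq : (p.rotate x hx).IsCycle := hp.isCycle.rotate hx
  have hmem : ∀ e, e ∈ p.edges → e ∈ (p.rotate x hx).edges :=
    fun e he => (p.rotate_edges x hx).mem_iff.mpr he
  exact cycle_atMostTwo hq h12 h13 h23 (hmem _ h1) (hmem _ h2) (hmem _ h3)

lemma ham_twoNbrs (x : W) :
    ∃ y z : W, y ≠ z ∧ s(x, y) ∈ p.edges ∧ s(x, z) ∈ p.edges := by
  have hx : x ∈ p.support := hp.mem_support x
  have hq : (p.rotate x hx).IsCycle := hp.isCycle.rotate hx
  obtain ⟨y, z, hyz, hy, hz⟩ := cycle_twoNbrs hq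
  exact ⟨y, z, hyz, (p.rotate_edges x hx).mem_iff.mp hy, (p.rotate_edges x hx).mem_iff.mp hz⟩

lemma ham_closed (S : Set W)
    (hS : ∀ x ∈ S, ∀ y, s(x, y) ∈ p.edges → y ∈ S) {x0 z : W}
    (hx0 : x0 ∈ S) (hz : z ∉ S) : False := by
  have hx0s : x0 ∈ p.support := hp.mem_support x0
  have hqe : ∀ e ∈ (p.rotate x0 hx0s).edges, e ∈ p.edges :=
    fun e he => (p.rotate_edges x0 hx0s).mem_iff.mp he
  have hzq : z ∈ (p.rotate x0 hx0s).support := by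
    have h1 : z ∈ p.support.tail :=
      mem_tail_support_of_closed hp.isCycle.not_nil (hp.mem_support z)
    exact List.mem_of_mem_tail ((p.support_rotate x0 hx0s).mem_iff.mpr h1)
  exact hz (walk_support_closed S hS _ hqe hx0 z hzq)

/-- If the neighbourhood of `x` is exactly `{u, v}`, both edges are forced. -/
lemma ham_forced2 {x u v : W} (huv : u ≠ v)
    (hnb : ∀ y : W, s(x, y) ∈ p.edges → y = u ∨ y = v) :
    s(x, u) ∈ p.edges ∧ s(x, v) ∈ p.edges := by
  obtain ⟨y, z, hyz, hy, hz⟩ := ham_twoNbrs hp x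
  rcases hnb y hy with rfl | rfl <;> rcases hnb z hz with rfl | rfl
  · exact absurd rfl hyz
  · exact ⟨hy, hz⟩
  · exact ⟨hz, hy⟩
  · exact absurd rfl hyz

end Ham
section GEsec
variable {V : Type*} [Fintype V] [DecidableEq V] {E : SimpleGraph V} [DecidableRel E.Adj]
  {f : Arc E ≃ Fin (Fintype.card (Arc E))}

lemma aV_eq_aV {g g' : Arc E} {i j : ℕ} :
    aV g i = aV g' j ↔ g = g' ∧ (i - 1) % 31 = (j - 1) % 31 := by
  simp [aV, Sum.inl.injEq, Prod.mk.injEq, Fin.mk.injEq]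

lemma bV_eq_bV {v w : V} {k l : ℕ} :
    bV E v k = bV E w l ↔ v = w ∧ (k - 1) % 6 = (l - 1) % 6 := by
  simp [bV, Sum.inr.injEq, Prod.mk.injEq, Fin.mk.injEq]

lemma aV_ne_bV {g : Arc E} {v : V} {i k : ℕ} : aV g i ≠ bV E v k := by
  simp [aV, bV]

lemma aV_ne_idx {g g' : Arc E} {i j : ℕ} (h : (i - 1) % 31 ≠ (j - 1) % 31) :
    aV g i ≠ aV g' j := fun he => h (aV_eq_aV.mp he).2

lemma aV_ne_arc {g g' : Arc E} {i j : ℕ} (h : g ≠ g') : aV g i ≠ aV g' j :=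
  fun he => h (aV_eq_aV.mp he).1

lemma nbhd7 (g : Arc E) (y : GEVert E) (h : (GE E f).Adj (aV g 7) y) :
    y = aV g 6 ∨ y = aV g 8 := by
  rw [GE, SimpleGraph.fromRel_adj] at h
  obtain ⟨-, h | h⟩ := h <;>
    simp only [GERel] at h <;>
    obtain ⟨e, i, j, hg, h1, h2⟩ | ⟨e, e', hf, h1, h2⟩ |
      ⟨e, e', hv, (⟨h1, h2⟩|⟨h1, h2⟩|⟨h1, h2⟩|⟨h1, h2⟩|⟨h1, h2⟩|⟨h1, h2⟩|⟨h1, h2⟩|⟨h1, h2⟩|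
        ⟨h1, h2⟩|⟨h1, h2⟩|⟨h1, h2⟩|⟨h1, h2⟩)⟩ := h <;>
    (try first | subst h1 | subst h2)
  all_goals
    simp only [aV, bV, gadgetRel, Sum.inl.injEq, Sum.inr.injEq, Prod.mk.injEq, Fin.mk.injEq,
      reduceCtorEq, and_false, false_and, and_true, true_and] at *
  all_goals try obtain ⟨rfl, h1⟩ := h1
  all_goals try obtain ⟨rfl, h2⟩ := h2
  all_goals try subst h1
  all_goals try subst h2
  all_goals try simp only [aV, bV, Sum.inl.injEq, Sum.inr.injEq, Prod.mk.injEq, Fin.mk.injEq,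
    reduceCtorEq, and_false, false_and, eq_self_iff_true, true_and, and_true, true_or, or_true,
    not_true, not_false_iff] at *
  all_goals omega

lemma nbhd10 (g : Arc E) (y : GEVert E) (h : (GE E f).Adj (aV g 10) y) :
    y = aV g 9 ∨ y = aV g 11 := by
  rw [GE, SimpleGraph.fromRel_adj] at h
  obtain ⟨-, h | h⟩ := h <;>
    simp only [GERel] at h <;>
    obtain ⟨e, i, j, hg, h1, h2⟩ | ⟨e, e', hf, h1, h2⟩ |
      ⟨e, e', hv, (⟨h1, h2⟩|⟨h1, h2⟩|⟨h1, h2⟩|⟨h1, h2⟩|⟨h1, h2⟩|⟨h1, h2⟩|⟨h1, h2⟩|⟨h1, h2⟩|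
        ⟨h1, h2⟩|⟨h1, h2⟩|⟨h1, h2⟩|⟨h1, h2⟩)⟩ := h <;>
    (try first | subst h1 | subst h2)
  all_goals
    simp only [aV, bV, gadgetRel, Sum.inl.injEq, Sum.inr.injEq, Prod.mk.injEq, Fin.mk.injEq,
      reduceCtorEq, and_false, false_and, and_true, true_and] at *
  all_goals try obtain ⟨rfl, h1⟩ := h1
  all_goals try obtain ⟨rfl, h2⟩ := h2
  all_goals try subst h1
  all_goals try subst h2
  all_goals try simp only [aV, bV, Sum.inl.injEq, Sum.inr.injEq, Prod.mk.injEq, Fin.mk.injEq,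
    reduceCtorEq, and_false, false_and, eq_self_iff_true, true_and, and_true, true_or, or_true,
    not_true, not_false_iff] at *
  all_goals omega

lemma nbhd13 (g : Arc E) (y : GEVert E) (h : (GE E f).Adj (aV g 13) y) :
    y = aV g 12 ∨ y = aV g 14 := by
  rw [GE, SimpleGraph.fromRel_adj] at h
  obtain ⟨-, h | h⟩ := h <;>
    simp only [GERel] at h <;>
    obtain ⟨e, i, j, hg, h1, h2⟩ | ⟨e, e', hf, h1, h2⟩ |
      ⟨e, e', hv, (⟨h1, h2⟩|⟨h1, h2⟩|⟨h1, h2⟩|⟨h1, h2⟩|⟨h1, h2⟩|⟨h1, h2⟩|⟨h1, h2⟩|⟨h1, h2⟩|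
        ⟨h1, h2⟩|⟨h1, h2⟩|⟨h1, h2⟩|⟨h1, h2⟩)⟩ := h <;>
    (try first | subst h1 | subst h2)
  all_goals
    simp only [aV, bV, gadgetRel, Sum.inl.injEq, Sum.inr.injEq, Prod.mk.injEq, Fin.mk.injEq,
      reduceCtorEq, and_false, false_and, and_true, true_and] at *
  all_goals try obtain ⟨rfl, h1⟩ := h1
  all_goals try obtain ⟨rfl, h2⟩ := h2
  all_goals try subst h1
  all_goals try subst h2
  all_goals try simp only [aV, bV, Sum.inl.injEq, Sum.inr.injEq, Prod.mk.injEq, Fin.mk.injEq,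
    reduceCtorEq, and_false, false_and, eq_self_iff_true, true_and, and_true, true_or, or_true,
    not_true, not_false_iff] at *
  all_goals omega

lemma nbhd16 (g : Arc E) (y : GEVert E) (h : (GE E f).Adj (aV g 16) y) :
    y = aV g 15 ∨ y = aV g 17 := by
  rw [GE, SimpleGraph.fromRel_adj] at h
  obtain ⟨-, h | h⟩ := h <;>
    simp only [GERel] at h <;>
    obtain ⟨e, i, j, hg, h1, h2⟩ | ⟨e, e', hf, h1, h2⟩ |
      ⟨e, e', hv, (⟨h1, h2⟩|⟨h1, h2⟩|⟨h1, h2⟩|⟨h1, h2⟩|⟨h1, h2⟩|⟨h1, h2⟩|⟨h1, h2⟩|⟨h1, h2⟩|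
        ⟨h1, h2⟩|⟨h1, h2⟩|⟨h1, h2⟩|⟨h1, h2⟩)⟩ := h <;>
    (try first | subst h1 | subst h2)
  all_goals
    simp only [aV, bV, gadgetRel, Sum.inl.injEq, Sum.inr.injEq, Prod.mk.injEq, Fin.mk.injEq,
      reduceCtorEq, and_false, false_and, and_true, true_and] at *
  all_goals try obtain ⟨rfl, h1⟩ := h1
  all_goals try obtain ⟨rfl, h2⟩ := h2
  all_goals try subst h1
  all_goals try subst h2
  all_goals try simp only [aV, bV, Sum.inl.injEq, Sum.inr.injEq, Prod.mk.injEq, Fin.mk.injEq,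
    reduceCtorEq, and_false, false_and, eq_self_iff_true, true_and, and_true, true_or, or_true,
    not_true, not_false_iff] at *
  all_goals omega

lemma nbhd19 (g : Arc E) (y : GEVert E) (h : (GE E f).Adj (aV g 19) y) :
    y = aV g 18 ∨ y = aV g 20 := by
  rw [GE, SimpleGraph.fromRel_adj] at h
  obtain ⟨-, h | h⟩ := h <;>
    simp only [GERel] at h <;>
    obtain ⟨e, i, j, hg, h1, h2⟩ | ⟨e, e', hf, h1, h2⟩ |
      ⟨e, e', hv, (⟨h1, h2⟩|⟨h1, h2⟩|⟨h1, h2⟩|⟨h1, h2⟩|⟨h1, h2⟩|⟨h1, h2⟩|⟨h1, h2⟩|⟨h1, h2⟩|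
        ⟨h1, h2⟩|⟨h1, h2⟩|⟨h1, h2⟩|⟨h1, h2⟩)⟩ := h <;>
    (try first | subst h1 | subst h2)
  all_goals
    simp only [aV, bV, gadgetRel, Sum.inl.injEq, Sum.inr.injEq, Prod.mk.injEq, Fin.mk.injEq,
      reduceCtorEq, and_false, false_and, and_true, true_and] at *
  all_goals try obtain ⟨rfl, h1⟩ := h1
  all_goals try obtain ⟨rfl, h2⟩ := h2
  all_goals try subst h1
  all_goals try subst h2
  all_goals try simp only [aV, bV, Sum.inl.injEq, Sum.inr.injEq, Prod.mk.injEq, Fin.mk.injEq,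
    reduceCtorEq, and_false, false_and, eq_self_iff_true, true_and, and_true, true_or, or_true,
    not_true, not_false_iff] at *
  all_goals omega

lemma nbhd11 (g : Arc E) (y : GEVert E) (h : (GE E f).Adj (aV g 11) y) :
    y = aV g 10 ∨ y = aV g 12 ∨ y = aV g 6 := by
  rw [GE, SimpleGraph.fromRel_adj] at h
  obtain ⟨-, h | h⟩ := h <;>
    simp only [GERel] at h <;>
    obtain ⟨e, i, j, hg, h1, h2⟩ | ⟨e, e', hf, h1, h2⟩ |
      ⟨e, e', hv, (⟨h1, h2⟩|⟨h1, h2⟩|⟨h1, h2⟩|⟨h1, h2⟩|⟨h1, h2⟩|⟨h1, h2⟩|⟨h1, h2⟩|⟨h1, h2⟩|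
        ⟨h1, h2⟩|⟨h1, h2⟩|⟨h1, h2⟩|⟨h1, h2⟩)⟩ := h <;>
    (try first | subst h1 | subst h2)
  all_goals
    simp only [aV, bV, gadgetRel, Sum.inl.injEq, Sum.inr.injEq, Prod.mk.injEq, Fin.mk.injEq,
      reduceCtorEq, and_false, false_and, and_true, true_and] at *
  all_goals try obtain ⟨rfl, h1⟩ := h1
  all_goals try obtain ⟨rfl, h2⟩ := h2
  all_goals try subst h1
  all_goals try subst h2
  all_goals try simp only [aV, bV, Sum.inl.injEq, Sum.inr.injEq, Prod.mk.injEq, Fin.mk.injEq,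
    reduceCtorEq, and_false, false_and, eq_self_iff_true, true_and, and_true, true_or, or_true,
    not_true, not_false_iff] at *
  all_goals omega

lemma nbhd17 (g : Arc E) (y : GEVert E) (h : (GE E f).Adj (aV g 17) y) :
    y = aV g 16 ∨ y = aV g 18 ∨ y = aV g 12 := by
  rw [GE, SimpleGraph.fromRel_adj] at h
  obtain ⟨-, h | h⟩ := h <;>
    simp only [GERel] at h <;>
    obtain ⟨e, i, j, hg, h1, h2⟩ | ⟨e, e', hf, h1, h2⟩ |
      ⟨e, e', hv, (⟨h1, h2⟩|⟨h1, h2⟩|⟨h1, h2⟩|⟨h1, h2⟩|⟨h1, h2⟩|⟨h1, h2⟩|⟨h1, h2⟩|⟨h1, h2⟩|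
        ⟨h1, h2⟩|⟨h1, h2⟩|⟨h1, h2⟩|⟨h1, h2⟩)⟩ := h <;>
    (try first | subst h1 | subst h2)
  all_goals
    simp only [aV, bV, gadgetRel, Sum.inl.injEq, Sum.inr.injEq, Prod.mk.injEq, Fin.mk.injEq,
      reduceCtorEq, and_false, false_and, and_true, true_and] at *
  all_goals try obtain ⟨rfl, h1⟩ := h1
  all_goals try obtain ⟨rfl, h2⟩ := h2
  all_goals try subst h1
  all_goals try subst h2
  all_goals try simp only [aV, bV, Sum.inl.injEq, Sum.inr.injEq, Prod.mk.injEq, Fin.mk.injEq,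
    reduceCtorEq, and_false, false_and, eq_self_iff_true, true_and, and_true, true_or, or_true,
    not_true, not_false_iff] at *
  all_goals omega

lemma nbhd8 (g : Arc E) (y : GEVert E) (h : (GE E f).Adj (aV g 8) y) :
    y = aV g 7 ∨ y = aV g 9 ∨ ∃ g' : Arc E, (g'.1).2 = (g.1).1 ∧ y = aV g' 18 := by
  rw [GE, SimpleGraph.fromRel_adj] at h
  obtain ⟨-, h | h⟩ := h <;>
    simp only [GERel] at h <;>
    obtain ⟨e, i, j, hg, h1, h2⟩ | ⟨e, e', hf, h1, h2⟩ |
      ⟨e, e', hv, (⟨h1, h2⟩|⟨h1, h2⟩|⟨h1, h2⟩|⟨h1, h2⟩|⟨h1, h2⟩|⟨h1, h2⟩|⟨h1, h2⟩|⟨h1, h2⟩|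
        ⟨h1, h2⟩|⟨h1, h2⟩|⟨h1, h2⟩|⟨h1, h2⟩)⟩ := h <;>
    (try first | subst h1 | subst h2)
  all_goals
    simp only [aV, bV, gadgetRel, Sum.inl.injEq, Sum.inr.injEq, Prod.mk.injEq, Fin.mk.injEq,
      reduceCtorEq, and_false, false_and, and_true, true_and] at *
  all_goals try obtain ⟨rfl, h1⟩ := h1
  all_goals try obtain ⟨rfl, h2⟩ := h2
  all_goals try subst h1
  all_goals try subst h2
  all_goals try simp only [aV, bV, Sum.inl.injEq, Sum.inr.injEq, Prod.mk.injEq, Fin.mk.injEq,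
    reduceCtorEq, and_false, false_and, eq_self_iff_true, true_and, and_true, true_or, or_true,
    not_true, not_false_iff] at *
  all_goals try exact Or.inl (by omega)
  all_goals try exact Or.inr (Or.inl (by omega))
  all_goals try (exfalso; omega)
  all_goals exact Or.inr (Or.inr ⟨e, hv, rfl⟩)

lemma nbhdb5 (v : V) (y : GEVert E) (h : (GE E f).Adj (bV E v 5) y) :
    y = bV E v 4 ∨ y = bV E v 6 := by
  rw [GE, SimpleGraph.fromRel_adj] at h
  obtain ⟨-, h | h⟩ := h <;>
    simp only [GERel] at h <;>
    obtain ⟨e, i, j, hg, h1, h2⟩ | ⟨e, e', hf, h1, h2⟩ |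
      ⟨e, e', hv, (⟨h1, h2⟩|⟨h1, h2⟩|⟨h1, h2⟩|⟨h1, h2⟩|⟨h1, h2⟩|⟨h1, h2⟩|⟨h1, h2⟩|⟨h1, h2⟩|
        ⟨h1, h2⟩|⟨h1, h2⟩|⟨h1, h2⟩|⟨h1, h2⟩)⟩ := h <;>
    (try first | subst h1 | subst h2)
  all_goals
    simp only [aV, bV, gadgetRel, Sum.inl.injEq, Sum.inr.injEq, Prod.mk.injEq, Fin.mk.injEq,
      reduceCtorEq, and_false, false_and, and_true, true_and] at *
  all_goals try obtain ⟨rfl, h1⟩ := h1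
  all_goals try obtain ⟨rfl, h2⟩ := h2
  all_goals try subst h1
  all_goals try subst h2
  all_goals try simp only [aV, bV, Sum.inl.injEq, Sum.inr.injEq, Prod.mk.injEq, Fin.mk.injEq,
    reduceCtorEq, and_false, false_and, eq_self_iff_true, true_and, and_true, true_or, or_true,
    not_true, not_false_iff] at *
  all_goals omega

lemma nbhdb6 (v : V) (y : GEVert E) (h : (GE E f).Adj (bV E v 6) y) :
    y = bV E v 5 ∨ ∃ g : Arc E, (g.1).1 = v ∧ y = aV g 12 := by
  rw [GE, SimpleGraph.fromRel_adj] at h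
  obtain ⟨-, h | h⟩ := h <;>
    simp only [GERel] at h <;>
    obtain ⟨e, i, j, hg, h1, h2⟩ | ⟨e, e', hf, h1, h2⟩ |
      ⟨e, e', hv, (⟨h1, h2⟩|⟨h1, h2⟩|⟨h1, h2⟩|⟨h1, h2⟩|⟨h1, h2⟩|⟨h1, h2⟩|⟨h1, h2⟩|⟨h1, h2⟩|
        ⟨h1, h2⟩|⟨h1, h2⟩|⟨h1, h2⟩|⟨h1, h2⟩)⟩ := h <;>
    (try first | subst h1 | subst h2)
  all_goals
    simp only [aV, bV, gadgetRel, Sum.inl.injEq, Sum.inr.injEq, Prod.mk.injEq, Fin.mk.injEq,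
      reduceCtorEq, and_false, false_and, and_true, true_and] at *
  all_goals try obtain ⟨rfl, h1⟩ := h1
  all_goals try obtain ⟨rfl, h2⟩ := h2
  all_goals try subst h1
  all_goals try subst h2
  all_goals try simp only [aV, bV, Sum.inl.injEq, Sum.inr.injEq, Prod.mk.injEq, Fin.mk.injEq,
    reduceCtorEq, and_false, false_and, eq_self_iff_true, true_and, and_true, true_or, or_true,
    not_true, not_false_iff] at *
  all_goals try exact Or.inl (by omega)
  all_goals try (exfalso; omega)
  all_goals exact Or.inr ⟨e', hv.symm, rfl⟩

end GEsec
section Main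
variable {V : Type*} [Fintype V] [DecidableEq V] {E : SimpleGraph V} [DecidableRel E.Adj]
  {f : Arc E ≃ Fin (Fintype.card (Arc E))}
  {r : GEVert E} {p : (GE E f).Walk r r}

lemma adj_of_mem {x y : GEVert E} (h : s(x, y) ∈ p.edges) : (GE E f).Adj x y := by
  rw [← SimpleGraph.mem_edgeSet]
  exact p.edges_subset_edgeSet h

variable (hp : p.IsHamiltonianCycle)
include hp

lemma f67 (g : Arc E) : s(aV g 7, aV g 6) ∈ p.edges :=
  (ham_forced2 hp (aV_ne_idx (by omega)) (fun y h => nbhd7 g y (adj_of_mem h))).1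

lemma f78 (g : Arc E) : s(aV g 7, aV g 8) ∈ p.edges :=
  (ham_forced2 hp (aV_ne_idx (by omega)) (fun y h => nbhd7 g y (adj_of_mem h))).2

lemma f910 (g : Arc E) : s(aV g 10, aV g 9) ∈ p.edges :=
  (ham_forced2 hp (aV_ne_idx (by omega)) (fun y h => nbhd10 g y (adj_of_mem h))).1

lemma f1011 (g : Arc E) : s(aV g 10, aV g 11) ∈ p.edges :=
  (ham_forced2 hp (aV_ne_idx (by omega)) (fun y h => nbhd10 g y (adj_of_mem h))).2

lemma f1213 (g : Arc E) : s(aV g 13, aV g 12) ∈ p.edges :=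
  (ham_forced2 hp (aV_ne_idx (by omega)) (fun y h => nbhd13 g y (adj_of_mem h))).1

lemma f1617 (g : Arc E) : s(aV g 16, aV g 17) ∈ p.edges :=
  (ham_forced2 hp (aV_ne_idx (by omega)) (fun y h => nbhd16 g y (adj_of_mem h))).2

lemma f1819 (g : Arc E) : s(aV g 19, aV g 18) ∈ p.edges :=
  (ham_forced2 hp (aV_ne_idx (by omega)) (fun y h => nbhd19 g y (adj_of_mem h))).1

lemma fb56 (v : V) : s(bV E v 5, bV E v 6) ∈ p.edges :=
  (ham_forced2 hp (fun h => by simpa [bV] using h)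
    (fun y h => nbhdb5 v y (adj_of_mem h))).2

/-- If the edge 8-9 of the gadget of `g` is used, then so is the edge 11-12. -/
lemma stepSA (g : Arc E) (h89 : s(aV g 8, aV g 9) ∈ p.edges) :
    s(aV g 11, aV g 12) ∈ p.edges := by
  have h611 : s(aV g 6, aV g 11) ∉ p.edges := by
    intro h611
    set S : Set (GEVert E) :=
      {aV g 6, aV g 7, aV g 8, aV g 9, aV g 10, aV g 11} with hSdef
    have hmem : ∀ k : ℕ, 6 ≤ k → k ≤ 11 → aV g k ∈ S := by
      intro k h1 h2
      interval_cases k <;> simp [hSdef]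
    have hS : ∀ x ∈ S, ∀ y, s(x, y) ∈ p.edges → y ∈ S := by
      intro x hx y hxy
      by_contra hy
      have hne : ∀ k : ℕ, 6 ≤ k → k ≤ 11 → aV g k ≠ y :=
        fun k h1 h2 h => hy (h ▸ hmem k h1 h2)
      simp only [hSdef, Set.mem_insert_iff, Set.mem_singleton_iff] at hx
      rcases hx with rfl | rfl | rfl | rfl | rfl | rfl
      · exact ham_atMostTwo hp (aV g 6) (aV_ne_idx (by omega))
          (hne 7 (by omega) (by omega)) (hne 11 (by omega) (by omega))
          (Sym2.eq_swap ▸ f67 hp g) h611 hxy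
      · exact ham_atMostTwo hp (aV g 7) (aV_ne_idx (by omega))
          (hne 6 (by omega) (by omega)) (hne 8 (by omega) (by omega))
          (f67 hp g) (f78 hp g) hxy
      · exact ham_atMostTwo hp (aV g 8) (aV_ne_idx (by omega))
          (hne 7 (by omega) (by omega)) (hne 9 (by omega) (by omega))
          (Sym2.eq_swap ▸ f78 hp g) h89 hxy
      · exact ham_atMostTwo hp (aV g 9) (aV_ne_idx (by omega))
          (hne 8 (by omega) (by omega)) (hne 10 (by omega) (by omega))
          (Sym2.eq_swap ▸ h89) (Sym2.eq_swap ▸ f910 hp g) hxy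
      · exact ham_atMostTwo hp (aV g 10) (aV_ne_idx (by omega))
          (hne 9 (by omega) (by omega)) (hne 11 (by omega) (by omega))
          (f910 hp g) (f1011 hp g) hxy
      · exact ham_atMostTwo hp (aV g 11) (aV_ne_idx (by omega))
          (hne 10 (by omega) (by omega)) (hne 6 (by omega) (by omega))
          (Sym2.eq_swap ▸ f1011 hp g) (Sym2.eq_swap ▸ h611) hxy
    refine ham_closed hp S hS (hmem 6 (by omega) (by omega)) (z := aV g 1) ?_
    simp only [hSdef, Set.mem_insert_iff, Set.mem_singleton_iff]
    rintro (h | h | h | h | h | h) <;> exact aV_ne_idx (by omega) h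
  obtain ⟨y, z, hyz, hy, hz⟩ := ham_twoNbrs hp (aV g 11)
  have cl : ∀ w : GEVert E, s(aV g 11, w) ∈ p.edges → w = aV g 10 ∨ w = aV g 12 := by
    intro w hw
    rcases nbhd11 g w (adj_of_mem hw) with rfl | rfl | rfl
    · exact Or.inl rfl
    · exact Or.inr rfl
    · exact absurd (Sym2.eq_swap ▸ hw) h611
  rcases cl y hy with rfl | rfl <;> rcases cl z hz with rfl | rfl
  · exact absurd rfl hyz
  · exact hz
  · exact hy
  · exact absurd rfl hyz

/-- If the edge 11-12 is used, then 12-17 and 12-b6 are unused. -/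
lemma stepSC (g : Arc E) (h1112 : s(aV g 11, aV g 12) ∈ p.edges) :
    s(aV g 12, aV g 17) ∉ p.edges ∧ s(bV E ((g : V × V).1) 6, aV g 12) ∉ p.edges := by
  constructor
  · intro h
    exact ham_atMostTwo hp (aV g 12) (aV_ne_idx (by omega)) (aV_ne_idx (by omega))
      (aV_ne_idx (by omega)) (Sym2.eq_swap ▸ h1112) (Sym2.eq_swap ▸ f1213 hp g) h
  · intro h
    exact ham_atMostTwo hp (aV g 12) (aV_ne_idx (by omega))
      aV_ne_bV aV_ne_bV
      (Sym2.eq_swap ▸ h1112) (Sym2.eq_swap ▸ f1213 hp g) (Sym2.eq_swap ▸ h)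

/-- If the chord 12-17 is unused, the edge 17-18 is used. -/
lemma stepSB (g : Arc E) (h1217 : s(aV g 12, aV g 17) ∉ p.edges) :
    s(aV g 17, aV g 18) ∈ p.edges := by
  obtain ⟨y, z, hyz, hy, hz⟩ := ham_twoNbrs hp (aV g 17)
  have cl : ∀ w : GEVert E, s(aV g 17, w) ∈ p.edges → w = aV g 16 ∨ w = aV g 18 := by
    intro w hw
    rcases nbhd17 g w (adj_of_mem hw) with rfl | rfl | rfl
    · exact Or.inl rfl
    · exact Or.inr rfl
    · exact absurd (Sym2.eq_swap ▸ hw) h1217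
  rcases cl y hy with rfl | rfl <;> rcases cl z hz with rfl | rfl
  · exact absurd rfl hyz
  · exact hz
  · exact hy
  · exact absurd rfl hyz

lemma eight_nine_not_mem (g : Arc E)
    (h : s(bV E ((g : V × V).1) 6, aV g 12) ∈ p.edges ∨ s(aV g 17, aV g 18) ∉ p.edges) :
    s(aV g 8, aV g 9) ∉ p.edges := by
  intro h89
  have h1112 := stepSA hp g h89
  obtain ⟨h1217, hb6⟩ := stepSC hp g h1112
  rcases h with h | h
  · exact hb6 h
  · exact h (stepSB hp g h1217)

lemma seventeen_eighteen_mem (g : Arc E)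
    (h : s(bV E ((g : V × V).1) 6, aV g 12) ∈ p.edges) :
    s(aV g 17, aV g 18) ∈ p.edges := by
  refine stepSB hp g ?_
  intro h1217
  exact ham_atMostTwo hp (aV g 12) aV_ne_bV (aV_ne_idx (by omega))
    (fun he => aV_ne_bV he.symm) (Sym2.eq_swap ▸ f1213 hp g) (Sym2.eq_swap ▸ h) h1217

end Main
end NHaux

/-- For every `d ≥ 1` and every `d`-regular base graph `E`, the graph `G_E`
is not Hamiltonian. -/
theorem stmt10 {V : Type*} [Fintype V] [DecidableEq V] (E : SimpleGraph V)
    [DecidableRel E.Adj] (d : ℕ) (hd : 1 ≤ d) (hreg : IsRegularDeg E d)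
    (f : Arc E ≃ Fin (Fintype.card (Arc E))) :
    ¬ (GE E f).IsHamiltonian := by
  classical
  intro hH
  by_cases hV : Nonempty V
  case neg =>
    have hcard : Fintype.card (GEVert E) ≠ 1 := by
      have hE : IsEmpty (GEVert E) := ⟨fun a => by
        rcases a with ⟨⟨⟨x, _⟩, _⟩, _⟩ | ⟨x, _⟩ <;> exact hV ⟨x⟩⟩
      rw [Fintype.card_eq_zero]
      omega
    obtain ⟨a, -⟩ := hH hcard
    rcases a with ⟨⟨⟨x, _⟩, _⟩, _⟩ | ⟨x, _⟩ <;> exact hV ⟨x⟩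
  case pos =>
  obtain ⟨v0⟩ := hV
  have hv0 : (E.neighborSet v0).ncard = d := hreg v0
  have hne : (E.neighborSet v0).Nonempty :=
    Set.nonempty_of_ncard_ne_zero (by omega)
  obtain ⟨w0, hw0⟩ := hne
  have hArc : Nonempty (Arc E) := ⟨⟨(v0, w0), hw0⟩⟩
  have hcard : Fintype.card (GEVert E) ≠ 1 := by
    have h6 : Fintype.card (GEVert E)
        = Fintype.card (Arc E × Fin 31) + Fintype.card (V × Fin 6) := Fintype.card_sum
    rw [Fintype.card_prod, Fintype.card_prod, Fintype.card_fin, Fintype.card_fin] at h6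
    have hV1 : 0 < Fintype.card V := Fintype.card_pos_iff.mpr ⟨v0⟩
    have hA1 : 0 < Fintype.card (Arc E) := Fintype.card_pos_iff.mpr hArc
    omega
  obtain ⟨r, p, hp⟩ := hH hcard
  set A : Finset (Arc E) :=
    Finset.univ.filter (fun g : Arc E => s(aV g 8, aV g 9) ∉ p.edges) with hAdef
  set B : Finset (Arc E) :=
    Finset.univ.filter (fun g : Arc E => s(aV g 17, aV g 18) ∉ p.edges) with hBdef
  set D : Finset (Arc E) :=
    Finset.univ.filter
      (fun g : Arc E => s(bV E ((g : V × V).1) 6, aV g 12) ∈ p.edges) with hDdef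
  have hD : D.Nonempty := by
    obtain ⟨y, z, hyz, hy, hz⟩ := NHaux.ham_twoNbrs hp (bV E v0 6)
    have cl : ∀ w, s(bV E v0 6, w) ∈ p.edges →
        w = bV E v0 5 ∨ ∃ g : Arc E, ((g : V × V)).1 = v0 ∧ w = aV g 12 :=
      fun w hw => NHaux.nbhdb6 v0 w (NHaux.adj_of_mem hw)
    have key : ∃ g : Arc E, ((g : V × V)).1 = v0 ∧ s(bV E v0 6, aV g 12) ∈ p.edges := by
      rcases cl y hy with rfl | ⟨g, hg, rfl⟩
      · rcases cl z hz with rfl | ⟨g, hg, rfl⟩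
        · exact absurd rfl hyz
        · exact ⟨g, hg, hz⟩
      · exact ⟨g, hg, hy⟩
    obtain ⟨g, hg1, hg2⟩ := key
    refine ⟨g, ?_⟩
    simp only [hDdef, Finset.mem_filter, Finset.mem_univ, true_and]
    rw [hg1]
    exact hg2
  have hBA : B ⊆ A := by
    intro g hg
    simp only [hAdef, hBdef, Finset.mem_filter, Finset.mem_univ, true_and] at hg ⊢
    exact NHaux.eight_nine_not_mem hp g (Or.inr hg)
  have hDA : D ⊆ A := by
    intro g hg
    simp only [hAdef, hDdef, Finset.mem_filter, Finset.mem_univ, true_and] at hg ⊢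
    exact NHaux.eight_nine_not_mem hp g (Or.inl hg)
  have hdisj : Disjoint B D := by
    rw [Finset.disjoint_left]
    intro g hgB hgD
    simp only [hBdef, hDdef, Finset.mem_filter, Finset.mem_univ, true_and] at hgB hgD
    exact hgB (NHaux.seventeen_eighteen_mem hp g hgD)
  have key' : ∀ g : Arc E, ∃ g' : Arc E,
      g ∈ A → g' ∈ B ∧ s(aV g 8, aV g' 18) ∈ p.edges := by
    intro g
    by_cases hg : g ∈ A
    · simp only [hAdef, Finset.mem_filter, Finset.mem_univ, true_and] at hg
      obtain ⟨y, z, hyz, hy, hz⟩ := NHaux.ham_twoNbrs hp (aV g 8)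
      have cl : ∀ w, s(aV g 8, w) ∈ p.edges →
          w = aV g 7 ∨ ∃ g' : Arc E, s(aV g 8, aV g' 18) ∈ p.edges := by
        intro w hw
        rcases NHaux.nbhd8 g w (NHaux.adj_of_mem hw) with rfl | rfl | ⟨g', h1, rfl⟩
        · exact Or.inl rfl
        · exact absurd hw hg
        · exact Or.inr ⟨g', hw⟩
      have hex : ∃ g' : Arc E, s(aV g 8, aV g' 18) ∈ p.edges := by
        rcases cl y hy with rfl | hgood
        · rcases cl z hz with rfl | hgood
          · exact absurd rfl hyz
          · exact hgood
        · exact hgood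
      obtain ⟨g', hg'⟩ := hex
      refine ⟨g', fun _ => ⟨?_, hg'⟩⟩
      simp only [hBdef, Finset.mem_filter, Finset.mem_univ, true_and]
      intro h1718
      exact NHaux.ham_atMostTwo hp (aV g' 18)
        (NHaux.aV_ne_idx (by omega)) (NHaux.aV_ne_idx (by omega))
        (NHaux.aV_ne_idx (by omega))
        (Sym2.eq_swap ▸ NHaux.f1819 hp g') (Sym2.eq_swap ▸ hg')
        (Sym2.eq_swap ▸ h1718)
    · exact ⟨g, fun h => absurd h hg⟩
  choose Φ hΦ using key'
  have hcardAB : A.card ≤ B.card := by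
    by_contra hlt
    push_neg at hlt
    obtain ⟨g₁, hg₁, g₂, hg₂, hgne, heq⟩ :=
      Finset.exists_ne_map_eq_of_card_lt_of_maps_to hlt (fun g hg => (hΦ g hg).1)
    have e1 : s(aV g₁ 8, aV (Φ g₁) 18) ∈ p.edges := (hΦ g₁ hg₁).2
    have e2 : s(aV g₂ 8, aV (Φ g₂) 18) ∈ p.edges := (hΦ g₂ hg₂).2
    rw [heq] at e1
    exact NHaux.ham_atMostTwo hp (aV (Φ g₂) 18)
      (NHaux.aV_ne_idx (by omega)) (NHaux.aV_ne_idx (by omega))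
      (NHaux.aV_ne_arc hgne)
      (Sym2.eq_swap ▸ NHaux.f1819 hp (Φ g₂)) (Sym2.eq_swap ▸ e1) (Sym2.eq_swap ▸ e2)
  have hsum : B.card + D.card ≤ A.card := by
    rw [← Finset.card_union_of_disjoint hdisj]
    exact Finset.card_le_card (Finset.union_subset hBA hDA)
  have hD1 : 1 ≤ D.card := Finset.card_pos.mpr hD
  omega
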